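/- arXiv:1708.00046 — 7 statements merged into one kernel-verified Lean document; each statement's English description precedes it below -/
import Mathlib

section
/- With notation as above, for any integers a and b, πᵃL ∩ π⁻ᵃM ⊆ πᵇL + π⁻ᵇM. -/
open scoped Pointwise

variable {R K V : Type*} [CommRing R] [IsDomain R] [IsDiscreteValuationRing R]
  [Field K] [Algebra R K] [IsFractionRing R K]
  [AddCommGroup V] [Module K V] [Module R V] [IsScalarTower R K V]
  [FiniteDimensional K V]

/-- A lattice in `V` is a finitely generated `R`-submodule spanning `V` over `K`. -/
def IsLattice (K : Type*) [Field K] [Algebra R K] [Module K V] (L : Submodule R V) : Prop :=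
  L.FG ∧ Submodule.span K (L : Set V) = ⊤

/-- `πⁿ L`, for `n ∈ ℤ` (via the embedding of `π` in `K`). -/
noncomputable def latTwist (π : R) (n : ℤ) (L : Submodule R V) : Submodule R V :=
  ((algebraMap R K π) ^ n) • L

/-- The lower middle `m₋(L,M) = ∑ₙ (πⁿL ∩ π⁻ⁿM)`. -/
noncomputable def lowerMiddle (π : R) (L M : Submodule R V) : Submodule R V :=
  ⨆ n : ℤ, (latTwist (K := K) π n L ⊓ latTwist (K := K) π (-n) M)

/-- The upper middle `m₊(L,M) = ⋂ₙ (πⁿL + π⁻ⁿM)`. -/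
noncomputable def upperMiddle (π : R) (L M : Submodule R V) : Submodule R V :=
  ⨅ n : ℤ, (latTwist (K := K) π n L ⊔ latTwist (K := K) π (-n) M)


lemma latTwist_antitone (π : R) (hπ : π ≠ 0) (L : Submodule R V) {m n : ℤ} (h : m ≤ n) :
    latTwist (K := K) π n L ≤ latTwist (K := K) π m L := by
  have hc : (algebraMap R K π) ≠ 0 := by
    simpa using (map_ne_zero_iff _ (IsFractionRing.injective R K)).2 hπ
  intro x hx
  rw [latTwist, ← SetLike.mem_coe, Submodule.coe_pointwise_smul, Set.mem_smul_set] at hx ⊢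
  obtain ⟨y, hy, rfl⟩ := hx
  refine ⟨(algebraMap R K π) ^ (n - m) • y, ?_, ?_⟩
  · have : (algebraMap R K π) ^ (n - m) = algebraMap R K (π ^ (n - m).toNat) := by
      rw [map_pow, ← zpow_natCast, Int.toNat_of_nonneg (by omega)]
    rw [this, algebraMap_smul]
    exact L.smul_mem _ hy
  · rw [smul_smul, ← zpow_add₀ hc, add_sub_cancel]

/-- For any integers `a, b`: `πᵃL ∩ π⁻ᵃM ⊆ πᵇL + π⁻ᵇM`. -/
theorem twist_inf_le_twist_sup (π : R) (hπ : Irreducible π)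
    (L M : Submodule R V) (hL : IsLattice K L) (hM : IsLattice K M) (a b : ℤ) :
    latTwist (K := K) π a L ⊓ latTwist (K := K) π (-a) M ≤
      latTwist (K := K) π b L ⊔ latTwist (K := K) π (-b) M := by
  rcases le_total b a with h | h
  · exact le_trans inf_le_left (le_trans (latTwist_antitone π hπ.ne_zero L h) le_sup_left)
  · exact le_trans inf_le_right
      (le_trans (latTwist_antitone π hπ.ne_zero M (by omega)) le_sup_right)
end

section
/- For any two lattices L, M of V, π·m₊(L,M) ⊆ m₋(L,M). -/
set_option linter.unusedSectionVars false

open scoped Pointwise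

variable {R K V : Type*} [CommRing R] [IsDomain R] [IsDiscreteValuationRing R]
  [Field K] [Algebra R K] [IsFractionRing R K]
  [AddCommGroup V] [Module K V] [Module R V] [IsScalarTower R K V]
  [FiniteDimensional K V]

/-! ### Auxiliary lemmas -/

lemma mem_ptsmul {a : K} {S : Submodule R V} {x : V} : x ∈ a • S ↔ ∃ y ∈ S, a • y = x :=
  Submodule.mem_map

lemma alg_pi_ne_zero {π : R} (hπ : Irreducible π) : algebraMap R K π ≠ 0 := by
  have := IsFractionRing.injective R K
  simpa using (map_ne_zero_iff (algebraMap R K) this).2 hπ.ne_zero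

lemma latTwist_succ_le (π : R) (hπ : Irreducible π) (n : ℤ) (L : Submodule R V) :
    latTwist (K := K) π (n + 1) L ≤ latTwist (K := K) π n L := by
  intro x hx
  obtain ⟨y, hy, rfl⟩ := mem_ptsmul.mp hx
  refine mem_ptsmul.mpr ⟨π • y, L.smul_mem π hy, ?_⟩
  rw [← algebraMap_smul (A := K) π y, smul_smul, ← zpow_add_one₀ (alg_pi_ne_zero hπ)]

lemma latTwist_le (π : R) (hπ : Irreducible π) (L : Submodule R V) {m n : ℤ} (h : m ≤ n) :
    latTwist (K := K) π n L ≤ latTwist (K := K) π m L :=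
  Int.le_induction (le_refl (latTwist (K := K) π m L))
    (fun k _ ih => (latTwist_succ_le π hπ k L).trans ih) n h

lemma smul_mem_latTwist_succ (π : R) (hπ : Irreducible π) {L : Submodule R V} {n : ℤ} {y : V}
    (hy : y ∈ latTwist (K := K) π n L) :
    (algebraMap R K π) • y ∈ latTwist (K := K) π (n + 1) L := by
  obtain ⟨w, hw, rfl⟩ := mem_ptsmul.mp hy
  refine mem_ptsmul.mpr ⟨w, hw, ?_⟩
  rw [smul_smul, ← zpow_one_add₀ (alg_pi_ne_zero hπ), add_comm]

/-- Every element of `V` lies in `π⁻ᴺ L` for some `N`, if `L` spans `V` over `K`. -/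
lemma exists_mem_latTwist_neg (π : R) (hπ : Irreducible π) (L : Submodule R V)
    (hL : Submodule.span K (L : Set V) = ⊤) (x : V) :
    ∃ N : ℕ, x ∈ latTwist (K := K) π (-(N : ℤ)) L := by
  have hc := alg_pi_ne_zero (K := K) hπ
  have hx : x ∈ Submodule.span K (L : Set V) := hL ▸ Submodule.mem_top
  induction hx using Submodule.span_induction with
  | mem y hy =>
    exact ⟨0, by simpa [latTwist] using hy⟩
  | zero => exact ⟨0, zero_mem _⟩
  | add y z _ _ ihy ihz =>
    obtain ⟨N₁, h₁⟩ := ihy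
    obtain ⟨N₂, h₂⟩ := ihz
    refine ⟨max N₁ N₂, add_mem ?_ ?_⟩
    · exact latTwist_le π hπ L (by exact_mod_cast neg_le_neg (Int.ofNat_le.2 (le_max_left N₁ N₂))) h₁
    · exact latTwist_le π hπ L (by exact_mod_cast neg_le_neg (Int.ofNat_le.2 (le_max_right N₁ N₂))) h₂
  | smul k y _ ih =>
    obtain ⟨N, hN⟩ := ih
    rcases eq_or_ne k 0 with rfl | hk
    · exact ⟨N, by simpa using (latTwist (K := K) π (-(N : ℤ)) L).zero_mem⟩
    obtain ⟨a, b, hb, hab⟩ := IsFractionRing.div_surjective (A := R) k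
    have hb0 : b ≠ 0 := nonZeroDivisors.ne_zero hb
    obtain ⟨m, u, rfl⟩ := IsDiscreteValuationRing.eq_unit_mul_pow_irreducible hb0 hπ
    obtain ⟨w, hw, rfl⟩ := mem_ptsmul.mp hN
    refine ⟨N + m, mem_ptsmul.mpr ⟨(a * (↑u⁻¹ : R)) • w, Submodule.smul_mem _ _ hw, ?_⟩⟩
    rw [← algebraMap_smul (A := K) (a * (↑u⁻¹ : R)) w, smul_smul, smul_smul]
    congr 1
    have hu0 : algebraMap R K (↑u : R) ≠ 0 := by
      have := IsFractionRing.injective R K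
      simpa using (map_ne_zero_iff (algebraMap R K) this).2 (Units.ne_zero u)
    have hu : algebraMap R K (↑u⁻¹ : R) = (algebraMap R K (↑u : R))⁻¹ := by
      apply eq_inv_of_mul_eq_one_left
      rw [← map_mul, Units.inv_mul, map_one]
    rw [← hab, map_mul, map_mul, map_pow, hu]
    rw [zpow_neg, zpow_neg, zpow_natCast, zpow_natCast, pow_add]
    field_simp

lemma latTwist_congr (π : R) (L : Submodule R V) {m n : ℤ} (h : m = n) :
    latTwist (K := K) π m L = latTwist (K := K) π n L := by rw [h]

lemma smul_shift_mem_lowerMiddle (π : R) (hπ : Irreducible π) (L M : Submodule R V) {y : V}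
    (hy : y ∈ ⨆ n : ℤ, (latTwist (K := K) π n L ⊓ latTwist (K := K) π (-(n + 1)) M)) :
    (algebraMap R K π) • y ∈ lowerMiddle (K := K) π L M := by
  refine Submodule.iSup_induction (motive := fun y => (algebraMap R K π) • y ∈ lowerMiddle (K := K) π L M)
    _ hy (fun n z hz => ?_) (by simpa using (lowerMiddle (K := K) π L M).zero_mem)
    (fun u v hu hv => by
      show (algebraMap R K π) • (u + v) ∈ _
      rw [smul_add]; exact add_mem hu hv)
  obtain ⟨hzL, hzM⟩ := hz
  refine Submodule.mem_iSup_of_mem (n + 1) ⟨smul_mem_latTwist_succ π hπ hzL, ?_⟩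
  refine latTwist_le π hπ M (by omega : -(n + 1) ≤ -(n + 1) + 1) ?_
  exact smul_mem_latTwist_succ π hπ hzM

/-- `π·m₊(L,M) ⊆ m₋(L,M)`. -/
theorem smul_upperMiddle_le_lowerMiddle (π : R) (hπ : Irreducible π)
    (L M : Submodule R V) (hL : IsLattice K L) (hM : IsLattice K M) :
    (algebraMap R K π) • upperMiddle (K := K) π L M ≤ lowerMiddle (K := K) π L M := by
  have hLspan : Submodule.span K (L : Set V) = ⊤ := hL.2
  have hMspan : Submodule.span K (M : Set V) = ⊤ := hM.2
  have hc := alg_pi_ne_zero (K := K) hπ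
  intro z hz
  obtain ⟨x, hx, rfl⟩ := mem_ptsmul.mp hz
  have hx' : ∀ n : ℤ, x ∈ latTwist (K := K) π n L ⊔ latTwist (K := K) π (-n) M :=
    fun n => (Submodule.mem_iInf _).mp hx n
  obtain ⟨N₁, hN₁⟩ := exists_mem_latTwist_neg π hπ L hLspan x
  obtain ⟨N₂, hN₂⟩ := exists_mem_latTwist_neg π hπ M hMspan x
  set N : ℕ := max N₁ N₂ with hNdef
  have hN₁' : (N₁ : ℤ) ≤ (N : ℤ) := by exact_mod_cast le_max_left N₁ N₂
  have hN₂' : (N₂ : ℤ) ≤ (N : ℤ) := by exact_mod_cast le_max_right N₁ N₂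
  have hNL : x ∈ latTwist (K := K) π (-(N : ℤ)) L :=
    latTwist_le π hπ L (neg_le_neg hN₁') hN₁
  have hNM : x ∈ latTwist (K := K) π (-(N : ℤ)) M :=
    latTwist_le π hπ M (neg_le_neg hN₂') hN₂
  set S : Submodule R V :=
    ⨆ n : ℤ, (latTwist (K := K) π n L ⊓ latTwist (K := K) π (-(n + 1)) M) with hSdef
  have key : ∀ k : ℕ, ∃ a, a ∈ latTwist (K := K) π (-(N : ℤ) + k) L ∧
      x - a ∈ latTwist (K := K) π (-(-(N : ℤ) + k)) M ∧ x - a ∈ S := by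
    intro k
    induction k with
    | zero =>
      refine ⟨x, ?_, ?_, ?_⟩
      · rwa [latTwist_congr π L (by push_cast; ring : -(N : ℤ) + (0 : ℕ) = -(N : ℤ))]
      · rw [sub_self]; exact zero_mem _
      · rw [sub_self]; exact zero_mem _
    | succ k ih =>
      obtain ⟨a, haL, haM, haS⟩ := ih
      obtain ⟨a', ha', b', hb', hab⟩ := Submodule.mem_sup.mp (hx' (-(N : ℤ) + k + 1))
      have hxa' : x - a' = b' := by rw [← hab, add_sub_cancel_left]
      refine ⟨a', ?_, ?_, ?_⟩
      · rwa [latTwist_congr π L (by push_cast; ring : -(N : ℤ) + ((k : ℕ) + 1 : ℕ) = -(N : ℤ) + k + 1)]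
      · rw [hxa']
        rwa [latTwist_congr π M
          (by push_cast; ring : -(-(N : ℤ) + ((k : ℕ) + 1 : ℕ)) = -(-(N : ℤ) + k + 1))]
      · have hdiff : a - a' ∈ S := by
          refine Submodule.mem_iSup_of_mem (-(N : ℤ) + k) ⟨?_, ?_⟩
          · exact sub_mem haL (latTwist_succ_le π hπ _ L ha')
          · have h1 : x - a' ∈ latTwist (K := K) π (-(-(N : ℤ) + k + 1)) M := hxa' ▸ hb'
            have h2 : x - a ∈ latTwist (K := K) π (-(-(N : ℤ) + k + 1)) M :=
              latTwist_le π hπ M (by omega) haM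
            have : a - a' = (x - a') - (x - a) := by abel
            rw [this]
            rw [latTwist_congr π M (by ring : -(-(N : ℤ) + (k : ℤ) + 1) = -(-(N : ℤ) + k + 1))] at *
            exact sub_mem h1 h2
        have : x - a' = (x - a) + (a - a') := by abel
        rw [this]
        exact add_mem haS hdiff
  obtain ⟨a, haL, haM, haS⟩ := key (2 * N)
  have haL' : a ∈ latTwist (K := K) π (N : ℤ) L := by
    rwa [latTwist_congr π L (by push_cast; ring : -(N : ℤ) + ((2 * N : ℕ) : ℤ) = (N : ℤ))] at haL
  have haM0 : x - a ∈ latTwist (K := K) π (-(N : ℤ)) M := by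
    rwa [latTwist_congr π M (by push_cast; ring : -(-(N : ℤ) + ((2 * N : ℕ) : ℤ)) = -(N : ℤ))] at haM
  have haM' : a ∈ latTwist (K := K) π (-(N : ℤ)) M := by
    have : a = x - (x - a) := by abel
    rw [this]; exact sub_mem hNM haM0
  have hsplit : (algebraMap R K π) • x = (algebraMap R K π) • a + (algebraMap R K π) • (x - a) := by
    rw [← smul_add]; congr 1; abel
  rw [hsplit]
  refine add_mem ?_ (smul_shift_mem_lowerMiddle π hπ L M haS)
  refine Submodule.mem_iSup_of_mem ((N : ℤ) + 1) ⟨smul_mem_latTwist_succ π hπ haL', ?_⟩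
  refine latTwist_le π hπ M (by omega : -((N : ℤ) + 1) ≤ -(N : ℤ) + 1) ?_
  exact smul_mem_latTwist_succ π hπ haM'
end

section
/- Given two lattices L and M of a finite-dimensional K-vector space V over the fraction field K of a DVR R, there exists a decomposition V = ⊕ᵢ Vᵢ into one-dimensional subspaces such that L = ⊕ᵢ (L ∩ Vᵢ) and M = ⊕ᵢ (M ∩ Vᵢ). -/
variable {R K V : Type*} [CommRing R] [IsDomain R] [IsDiscreteValuationRing R]
  [Field K] [Algebra R K] [IsFractionRing R K]
  [AddCommGroup V] [Module K V] [Module R V] [IsScalarTower R K V]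
  [FiniteDimensional K V]

include K in
lemma aux_nzsd : NoZeroSMulDivisors R V := by
  constructor
  intro r x h
  rw [← algebraMap_smul K r x, smul_eq_zero] at h
  rcases h with h | h
  · exact Or.inl ((map_eq_zero_iff _ (IsFractionRing.injective R K)).mp h)
  · exact Or.inr h

lemma aux_smul_mem (L : Submodule R V) (hL : Submodule.span K (L : Set V) = ⊤) (x : V) :
    ∃ r : R, r ≠ 0 ∧ r • x ∈ L := by
  have hx : x ∈ Submodule.span K (L : Set V) := hL ▸ Submodule.mem_top
  induction hx using Submodule.span_induction with
  | mem y hy => exact ⟨1, one_ne_zero, by simpa using hy⟩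
  | zero => exact ⟨1, one_ne_zero, by simp⟩
  | add y z _ _ hy hz =>
    obtain ⟨r, hr, hry⟩ := hy
    obtain ⟨s, hs, hsz⟩ := hz
    refine ⟨r * s, mul_ne_zero hr hs, ?_⟩
    rw [smul_add]
    exact L.add_mem (by rw [mul_comm, mul_smul]; exact L.smul_mem s hry)
      (by rw [mul_smul]; exact L.smul_mem r hsz)
  | smul c y _ hy =>
    obtain ⟨r, hr, hry⟩ := hy
    obtain ⟨⟨p, s⟩, hps⟩ := IsLocalization.surj (nonZeroDivisors R) c
    refine ⟨(s : R) * r, mul_ne_zero (nonZeroDivisors.ne_zero s.2) hr, ?_⟩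
    have : ((s : R) * r) • (c • y) = p • (r • y) := by
      rw [mul_smul, smul_comm r c, ← algebraMap_smul K (s : R), smul_smul,
        mul_comm ((algebraMap R K) (s : R)) c, hps, algebraMap_smul]
    rw [this]
    exact L.smul_mem p hry

set_option linter.unusedSectionVars false

lemma aux_exists_r (L M : Submodule R V) (hL : Submodule.span K (L : Set V) = ⊤)
    (hM : M.FG) : ∃ r : R, r ≠ 0 ∧ ∀ x ∈ M, r • x ∈ L := by
  classical
  obtain ⟨S, hS⟩ := hM
  choose f hf0 hfL using fun s : V => aux_smul_mem L hL s
  refine ⟨∏ s ∈ S, f s, Finset.prod_ne_zero_iff.mpr fun s _ => hf0 s, ?_⟩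
  intro x hx
  rw [← hS] at hx
  induction hx using Submodule.span_induction with
  | mem y hy =>
    rw [← Finset.mul_prod_erase S f hy, mul_comm, mul_smul]
    exact L.smul_mem _ (hfL y)
  | zero => simp
  | add y z _ _ hy hz => rw [smul_add]; exact L.add_mem hy hz
  | smul c y _ hy => rw [smul_comm]; exact L.smul_mem c hy

/-- Given two lattices `L, M` of `V`, there is a decomposition `V = ⊕ᵢ Vᵢ` into
one-dimensional subspaces which is compatible with both `L` and `M`, i.e.
`L = ⊕ᵢ (L ∩ Vᵢ)` and `M = ⊕ᵢ (M ∩ Vᵢ)`. -/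
theorem exists_common_splitting (L M : Submodule R V)
    (hL : IsLattice K L) (hM : IsLattice K M) :
    ∃ W : Fin (Module.finrank K V) → Submodule K V,
      DirectSum.IsInternal W ∧
      (∀ i, Module.finrank K (W i) = 1) ∧
      L = ⨆ i, (L ⊓ (W i).restrictScalars R) ∧
      M = ⨆ i, (M ⊓ (W i).restrictScalars R) := by
  classical
  have := aux_nzsd (R := R) (K := K) (V := V)
  obtain ⟨r, hr, hrM⟩ := aux_exists_r L M hL.2 hM.1
  -- L is finite free over R
  have : Module.Finite R L := Module.Finite.iff_fg.mpr hL.1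
  have : Module.Free R L := Module.free_of_finite_type_torsion_free'
  let ι := Module.Free.ChooseBasisIndex R L
  let b : Module.Basis ι R L := Module.Free.chooseBasis R L
  -- the scaled copy of M inside L
  let M' : Submodule R V := M.map (LinearMap.lsmul R V r)
  have hM'L : M' ≤ L := by
    rintro _ ⟨m, hm, rfl⟩
    exact hrM m hm
  let N : Submodule R L := M'.comap L.subtype
  obtain ⟨n, bM, bN, f, a, snf⟩ := N.smithNormalForm b
  -- the images of bM in V
  let v : ι → V := fun i => ((bM i : L) : V)
  have hvL : ∀ i, v i ∈ L := fun i => (bM i).2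
  have hspanv : Submodule.span R (Set.range v) = L := by
    have : Set.range v = L.subtype '' (Set.range bM) := by
      rw [← Set.range_comp]; rfl
    rw [this, ← Submodule.map_span, bM.span_eq, Submodule.map_top, Submodule.range_subtype]
  have hliv : LinearIndependent K v := by
    have h1 : LinearIndependent R v :=
      bM.linearIndependent.map' L.subtype (Submodule.ker_subtype L)
    exact h1.localization K (nonZeroDivisors R)
  have hspKv : Submodule.span K (Set.range v) = ⊤ := by
    rw [← Submodule.span_span_of_tower (R := R)]
    rw [show Submodule.span R (Set.range v) = (L : Set V) from congrArg _ hspanv]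
    exact hL.2
  let bV : Module.Basis ι K V := Module.Basis.mk hliv (by rw [hspKv])
  have hbV : ∀ i, bV i = v i := fun i => by simp [bV]
  have hcard : Fintype.card ι = Module.finrank K V :=
    (Module.finrank_eq_card_basis bV).symm
  let e : Fin (Module.finrank K V) ≃ ι := (Fintype.equivFinOfCardEq hcard).symm
  refine ⟨fun i => K ∙ v (e i), ?_, ?_, ?_, ?_⟩
  · rw [DirectSum.isInternal_submodule_iff_iSupIndep_and_iSup_eq_top]
    constructor
    · have := hliv.iSupIndep_span_singleton
      exact this.comp e.injective
    · rw [e.iSup_comp (g := fun i => K ∙ v i), ← Submodule.span_range_eq_iSup, hspKv]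
  · intro i
    exact finrank_span_singleton (by rw [← hbV]; exact bV.ne_zero (e i))
  · refine le_antisymm ?_ (iSup_le fun i => inf_le_left)
    conv_lhs => rw [← hspanv]
    rw [Submodule.span_le]
    rintro _ ⟨i, rfl⟩
    refine Submodule.mem_iSup_of_mem (e.symm i) ⟨hvL i, ?_⟩
    show v i ∈ K ∙ v (e (e.symm i))
    rw [e.apply_symm_apply]
    exact Submodule.mem_span_singleton_self _
  · -- the M part
    refine le_antisymm ?_ (iSup_le fun i => inf_le_left)
    set u : K := algebraMap R K r with hu_def
    have hu : u ≠ 0 := (map_ne_zero_iff _ (IsFractionRing.injective R K)).mpr hr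
    let g : V ≃ₗ[R] V := (LinearEquiv.smulOfNeZero K V u hu).restrictScalars R
    have hg : ∀ x : V, g x = r • x := fun x => by
      show u • x = r • x
      rw [hu_def, algebraMap_smul]
    have hgM : M.map (g : V →ₗ[R] V) = M' := by
      have : (g : V →ₗ[R] V) = LinearMap.lsmul R V r := by
        ext x; exact hg x
      rw [this]
    -- images of bN in V
    let w : Fin n → V := fun j => (((bN j : N) : L) : V)
    have hspw : Submodule.span R (Set.range w) = M' := by
      have h1 : Set.range w = L.subtype '' (N.subtype '' (Set.range bN)) := by
        rw [Set.image_image, ← Set.range_comp]; rfl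
      rw [h1, ← Submodule.map_span, ← Submodule.map_span, bN.span_eq, Submodule.map_top,
        Submodule.range_subtype, Submodule.map_comap_subtype, inf_eq_right.mpr hM'L]
    have hgsymm : ∀ x : V, g.symm x = u⁻¹ • x := by
      intro x
      rw [LinearEquiv.symm_apply_eq]
      show x = u • u⁻¹ • x
      rw [smul_smul, mul_inv_cancel₀ hu, one_smul]
    have hMspan : Submodule.span R (Set.range fun j => g.symm (w j)) = M := by
      have h2 : M = Submodule.map (g.symm : V →ₗ[R] V) M' := by
        rw [← hgM, ← Submodule.map_comp]
        have : (g.symm : V →ₗ[R] V) ∘ₗ (g : V →ₗ[R] V) = LinearMap.id := by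
          ext x; simp
        rw [this, Submodule.map_id]
      rw [h2, ← hspw, Submodule.map_span, ← Set.range_comp]
      rfl
    conv_lhs => rw [← hMspan]
    rw [Submodule.span_le]
    rintro _ ⟨j, rfl⟩
    have hwj : w j = a j • v (f j) := by
      have h3 : ((bN j : L) : V) = ((a j • bM (f j) : L) : V) := congrArg _ (snf j)
      simpa using h3
    refine Submodule.mem_iSup_of_mem (e.symm (f j)) ⟨?_, ?_⟩
    · rw [← hMspan]
      exact Submodule.subset_span ⟨j, rfl⟩
    · show g.symm (w j) ∈ K ∙ v (e (e.symm (f j)))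
      rw [e.apply_symm_apply, hgsymm, hwj]
      refine Submodule.smul_mem _ _ ?_
      rw [← algebraMap_smul K (a j)]
      exact Submodule.smul_mem _ _ (Submodule.mem_span_singleton_self _)
end

section
/- Let T be an R-module with πᴺT = 0 for some N ≥ 1. Define m₋(T) = ∑_{n≥0}(Im πⁿ ∩ Ker πⁿ) and m₊(T) = ⋂_{n≥0}(Im πⁿ + Ker πⁿ), where π acts as multiplication on T. Then π·m₊(T) ⊆ m₋(T) ⊆ m₊(T). -/
open scoped Pointwise

/-- For an `R`-module `T` killed by `πᴺ` (`N ≥ 1`), with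
`m₋(T) = ∑_{n≥0} (Im πⁿ ∩ Ker πⁿ)` and `m₊(T) = ⋂_{n≥0} (Im πⁿ + Ker πⁿ)`,
one has `π·m₊(T) ⊆ m₋(T) ⊆ m₊(T)`. -/
theorem smul_upperMiddle_le_lowerMiddle_le_upperMiddle
    {R : Type*} [CommRing R] [IsDomain R] [IsDiscreteValuationRing R]
    (π : R) (hπ : Irreducible π)
    (T : Type*) [AddCommGroup T] [Module R T]
    (N : ℕ) (hN : 1 ≤ N) (hT : ∀ t : T, π ^ N • t = 0) :
    π • (⨅ n : ℕ, (LinearMap.range (LinearMap.lsmul R T (π ^ n)) ⊔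
          LinearMap.ker (LinearMap.lsmul R T (π ^ n)))) ≤
      (⨆ n : ℕ, (LinearMap.range (LinearMap.lsmul R T (π ^ n)) ⊓
          LinearMap.ker (LinearMap.lsmul R T (π ^ n)))) ∧
    (⨆ n : ℕ, (LinearMap.range (LinearMap.lsmul R T (π ^ n)) ⊓
          LinearMap.ker (LinearMap.lsmul R T (π ^ n)))) ≤
      (⨅ n : ℕ, (LinearMap.range (LinearMap.lsmul R T (π ^ n)) ⊔
          LinearMap.ker (LinearMap.lsmul R T (π ^ n)))) := by
  have hrange : ∀ {m n : ℕ}, m ≤ n →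
      LinearMap.range (LinearMap.lsmul R T (π ^ n)) ≤
        LinearMap.range (LinearMap.lsmul R T (π ^ m)) := by
    intro m n h w hw
    obtain ⟨t, rfl⟩ := hw
    exact ⟨π ^ (n - m) • t, by
      simp only [LinearMap.lsmul_apply, smul_smul, ← pow_add]
      rw [← Nat.add_sub_assoc h, Nat.add_sub_cancel_left]⟩
  have hker : ∀ {m n : ℕ}, m ≤ n →
      LinearMap.ker (LinearMap.lsmul R T (π ^ m)) ≤
        LinearMap.ker (LinearMap.lsmul R T (π ^ n)) := by
    intro m n h w hw
    simp only [LinearMap.mem_ker, LinearMap.lsmul_apply] at hw ⊢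
    rw [← Nat.sub_add_cancel h, pow_add, mul_smul, hw, smul_zero]
  constructor
  · intro w hw
    obtain ⟨x, hx, rfl⟩ := hw
    simp only [SetLike.mem_coe, Submodule.mem_iInf] at hx
    have hdec : ∀ n : ℕ, ∃ y z : T, π ^ n • z = 0 ∧ π ^ n • y + z = x := by
      intro n
      obtain ⟨a, ha, b, hb, hab⟩ := Submodule.mem_sup.mp (hx n)
      obtain ⟨y, rfl⟩ := ha
      exact ⟨y, b, hb, hab⟩
    choose y z hz hyz using hdec
    set f : Module.End R T := DistribMulAction.toLinearMap R T π with hf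
    have hfx : f x = π • x := rfl
    -- claim: π • z n ∈ the sup for all n
    have key : ∀ n : ℕ, π • z n ∈
        (⨆ n : ℕ, (LinearMap.range (LinearMap.lsmul R T (π ^ n)) ⊓
          LinearMap.ker (LinearMap.lsmul R T (π ^ n)))) := by
      intro n
      induction n with
      | zero =>
        have h0 : z 0 = 0 := by simpa using hz 0
        rw [h0, smul_zero]; exact Submodule.zero_mem _
      | succ n ih =>
        have e1 : z n = x - π ^ n • y n := by rw [← hyz n]; abel
        have e2 : z (n + 1) = x - π ^ (n + 1) • y (n + 1) := by rw [← hyz (n + 1)]; abel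
        have hdiff : z (n + 1) - z n = π ^ n • y n - π ^ (n + 1) • y (n + 1) := by
          rw [e1, e2]; abel
        have hmem : π • (z (n + 1) - z n) ∈
            LinearMap.range (LinearMap.lsmul R T (π ^ n)) ⊓
              LinearMap.ker (LinearMap.lsmul R T (π ^ n)) := by
          refine Submodule.mem_inf.mpr ⟨⟨π • y n - π ^ 2 • y (n + 1), ?_⟩, ?_⟩
          · simp only [LinearMap.lsmul_apply, hdiff, smul_sub, smul_smul]
            ring_nf
          · have h2 : π ^ (n + 1) • z n = 0 := by
              rw [pow_succ', mul_smul, hz n, smul_zero]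
            simp only [LinearMap.mem_ker, LinearMap.lsmul_apply, smul_sub, smul_smul,
              ← pow_succ, hz (n + 1), h2, sub_zero]
        have : π • z (n + 1) = π • z n + π • (z (n + 1) - z n) := by
          rw [smul_sub]; abel
        rw [this]
        exact Submodule.add_mem _ ih (Submodule.mem_iSup_of_mem n hmem)
    -- now π • x = π • z N
    have hxz : π • x = π • z N := by
      rw [← hyz N, smul_add, smul_comm, hT (π • y N), zero_add]
    have : f x = π • x := rfl
    show f x ∈ _
    rw [this, hxz]
    exact key N
  · apply iSup_le
    intro n
    apply le_iInf
    intro m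
    rcases le_total m n with h | h
    · exact le_trans inf_le_left (le_trans (hrange h) le_sup_left)
    · exact le_trans inf_le_right (le_trans (hker h) le_sup_right)
end

section
/- Let A be an R-algebra acting R-linearly on a finite-dimensional K-vector space V (R a DVR with fraction field K). Then there exists an A-stable lattice of V if and only if the image of A in End_K(V) is a finitely generated R-module. -/
private theorem end_smul_comm {R K V : Type*} [CommRing R] [Field K] [Algebra R K]
    [AddCommGroup V] [Module K V] [Module R V] [IsScalarTower R K V]
    (f : Module.End K V) (r : R) (v : V) : f (r • v) = r • f v := by
  rw [← algebraMap_smul K r v, map_smul, algebraMap_smul]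

/-- Let `A` be an `R`-algebra acting `R`-linearly (via an `R`-algebra homomorphism
`ρ : A → End_K(V)`) on a finite-dimensional `K`-vector space `V`, where `R` is a DVR with
fraction field `K`. There exists an `A`-stable lattice of `V` if and only if the image
of `A` in `End_K(V)` is a finitely generated `R`-module. -/
theorem exists_stable_lattice_iff_fg
    {R K V A : Type*} [CommRing R] [IsDomain R] [IsDiscreteValuationRing R]
    [Field K] [Algebra R K] [IsFractionRing R K]
    [AddCommGroup V] [Module K V] [Module R V] [IsScalarTower R K V]
    [FiniteDimensional K V]
    [Ring A] [Algebra R A]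
    (ρ : A →ₐ[R] Module.End K V) :
    (∃ L : Submodule R V, L.FG ∧ Submodule.span K (L : Set V) = ⊤ ∧
        ∀ (a : A), ∀ x ∈ L, ρ a x ∈ L) ↔
      (LinearMap.range ρ.toLinearMap).FG := by
  have hRK : Function.Injective (algebraMap R K) := IsFractionRing.injective R K
  have hnz : NoZeroSMulDivisors R V := by
    constructor
    intro r v h
    rw [← algebraMap_smul K r v] at h
    rcases smul_eq_zero.mp h with h | h
    · exact Or.inl (by simpa using hRK (by simpa using h))
    · exact Or.inr h
  constructor
  · rintro ⟨L, hfg, hspan, hstab⟩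
    -- the stabilizer of L in End_K V
    set E : Submodule R (Module.End K V) :=
      { carrier := {f | ∀ x ∈ L, f x ∈ L}
        add_mem' := fun {f g} hf hg x hx => by
          simpa using L.add_mem (hf x hx) (hg x hx)
        zero_mem' := fun x hx => by simp
        smul_mem' := fun r f hf x hx => by
          rw [LinearMap.smul_apply]
          exact L.smul_mem r (hf x hx) } with hE
    haveI : Module.Finite R L := Module.Finite.iff_fg.mpr hfg
    haveI : IsNoetherian R (L →ₗ[R] L) := inferInstance
    -- restriction to L
    let φ : E →ₗ[R] (L →ₗ[R] L) :=
      { toFun := fun f =>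
          { toFun := fun x => ⟨f.1 x, f.2 x x.2⟩
            map_add' := fun x y => by ext; simp
            map_smul' := fun r x => by
              ext
              exact end_smul_comm f.1 r (x : V) }
        map_add' := fun f g => by ext; simp
        map_smul' := fun r f => by ext x; rfl }
    have hφ : Function.Injective φ := by
      intro f g h
      ext1
      apply LinearMap.ext_on_range (M := V) (v := fun x : L => (x : V)) ?_
      · intro x
        exact congrArg Subtype.val (LinearMap.congr_fun h x)
      · rw [← hspan]
        congr 1
        ext v
        simp [Set.range]
    haveI : IsNoetherian R E := isNoetherian_of_injective φ hφ
    have hle : LinearMap.range ρ.toLinearMap ≤ E := by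
      rintro f ⟨a, rfl⟩
      exact fun x hx => hstab a x hx
    have heq : LinearMap.range ρ.toLinearMap =
        ((LinearMap.range ρ.toLinearMap).comap E.subtype).map E.subtype := by
      rw [Submodule.map_comap_subtype]
      exact (inf_eq_right.mpr hle).symm
    rw [heq]
    exact Submodule.FG.map _ (IsNoetherian.noetherian _)
  · rintro hfg
    set M := LinearMap.range ρ.toLinearMap with hM
    obtain ⟨s, hs⟩ := hfg
    have b := Module.finBasis K V
    -- evaluation at x as an R-linear map
    let ev : V → (Module.End K V →ₗ[R] V) := fun x =>
      { toFun := fun f => f x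
        map_add' := fun f g => rfl
        map_smul' := fun r f => rfl }
    refine ⟨Submodule.span R (⋃ i, (fun f : Module.End K V => f (b i)) '' (s : Set _)), ?_, ?_, ?_⟩
    · exact Submodule.fg_def.mpr ⟨_, Set.finite_iUnion fun i => (s.finite_toSet.image _),
        rfl⟩
    · have hb : ∀ i, b i ∈ Submodule.span R
          (⋃ i, (fun f : Module.End K V => f (b i)) '' (s : Set _)) := by
        intro i
        have h1 : (1 : Module.End K V) ∈ M := ⟨1, map_one ρ⟩
        rw [← hs] at h1
        have hml : (Submodule.span R (s : Set _)).map (ev (b i)) ≤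
            Submodule.span R (⋃ i, (fun f : Module.End K V => f (b i)) '' (s : Set _)) := by
          rw [Submodule.map_span, Submodule.span_le]
          intro v hv
          obtain ⟨f, hf, rfl⟩ := hv
          exact Submodule.subset_span (Set.mem_iUnion.mpr ⟨i, ⟨f, hf, rfl⟩⟩)
        have h2 := hml (Submodule.mem_map_of_mem (f := ev (b i)) h1)
        simpa [ev] using h2
      refine top_unique ?_
      rw [← b.span_eq]
      refine Submodule.span_le.mpr ?_
      rintro v ⟨i, rfl⟩
      exact Submodule.subset_span (hb i)
    · intro a x hx
      have key : ∀ i (f : Module.End K V), f ∈ (s : Set _) →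
          ρ a (f (b i)) ∈ Submodule.span R
            (⋃ i, (fun f : Module.End K V => f (b i)) '' (s : Set _)) := by
        intro i f hf
        have hfM : f ∈ M := hs ▸ Submodule.subset_span hf
        obtain ⟨c, rfl⟩ := hfM
        have hmem : ρ a * ρ c ∈ M := ⟨a * c, map_mul ρ a c⟩
        rw [← hs] at hmem
        have hml : (Submodule.span R (s : Set _)).map (ev (b i)) ≤
            Submodule.span R (⋃ i, (fun f : Module.End K V => f (b i)) '' (s : Set _)) := by
          rw [Submodule.map_span, Submodule.span_le]
          intro v hv
          obtain ⟨g, hg, rfl⟩ := hv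
          exact Submodule.subset_span (Set.mem_iUnion.mpr ⟨i, ⟨g, hg, rfl⟩⟩)
        have h2 := hml (Submodule.mem_map_of_mem (f := ev (b i)) hmem)
        simpa [ev, Module.End.mul_apply] using h2
      -- ρ a maps the span into the span
      have hmap : Submodule.span R (⋃ i, (fun f : Module.End K V => f (b i)) '' (s : Set _)) ≤
          (Submodule.span R (⋃ i, (fun f : Module.End K V => f (b i)) '' (s : Set _))).comap
            ((ρ a).restrictScalars R) := by
        rw [Submodule.span_le]
        rintro v hv
        obtain ⟨i, f, hf, rfl⟩ := by simpa using hv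
        exact key i f hf
      exact hmap hx
end

section
/- Let char(k) ≠ 2, B a nondegenerate symmetric bilinear form on V with quadratic form q(x) = B(x,x), and M any lattice of V. Then there exists an orthogonal decomposition V = ⊕ᵢ Vᵢ into one-dimensional subspaces (B(Vᵢ, Vⱼ) = 0 for i ≠ j) such that M = ⊕ᵢ (M ∩ Vᵢ). -/
variable {R K V : Type*} [CommRing R] [IsDomain R] [IsDiscreteValuationRing R]
  [Field K] [Algebra R K] [IsFractionRing R K]
  [AddCommGroup V] [Module K V] [Module R V] [IsScalarTower R K V]
  [FiniteDimensional K V]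

set_option linter.unusedSectionVars false

lemma OS.div_total (a b : K) :
    (∃ r : R, a = algebraMap R K r * b) ∨ (∃ r : R, b = algebraMap R K r * a) := by
  rcases eq_or_ne b 0 with rfl | hb
  · exact Or.inr ⟨0, by simp⟩
  rcases ValuationRing.isInteger_or_isInteger R (a / b) with ⟨r, hr⟩ | ⟨r, hr⟩
  · exact Or.inl ⟨r, by rw [hr]; field_simp⟩
  · rcases eq_or_ne a 0 with rfl | ha
    · exact Or.inl ⟨0, by simp⟩
    · refine Or.inr ⟨r, ?_⟩
      rw [inv_div] at hr
      rw [hr]; field_simp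

lemma OS.finset_min (s : Finset K) (hs : s.Nonempty) :
    ∃ c ∈ s, ∀ a ∈ s, ∃ r : R, a = algebraMap R K r * c := by
  classical
  induction s using Finset.induction_on with
  | empty => simp at hs
  | @insert a t hat ih =>
    rcases t.eq_empty_or_nonempty with rfl | ht
    · exact ⟨a, Finset.mem_insert_self a _, fun b hb => by
        rw [Finset.mem_insert] at hb
        rcases hb with rfl | hb
        · exact ⟨1, by simp⟩
        · simp at hb⟩
    · obtain ⟨c, hc, hdvd⟩ := ih ht
      rcases OS.div_total (R := R) a c with ⟨r, hr⟩ | ⟨r, hr⟩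
      · refine ⟨c, Finset.mem_insert_of_mem hc, fun b hb => ?_⟩
        rcases Finset.mem_insert.mp hb with rfl | hb
        · exact ⟨r, hr⟩
        · exact hdvd b hb
      · refine ⟨a, Finset.mem_insert_self a _, fun b hb => ?_⟩
        rcases Finset.mem_insert.mp hb with rfl | hb
        · exact ⟨1, by simp⟩
        · obtain ⟨r', hr'⟩ := hdvd b hb
          exact ⟨r' * r, by rw [hr', hr, map_mul]; ring⟩

lemma OS.apply_mem_span (B : V →ₗ[K] V →ₗ[K] K) (S : Set V) {m m' : V}
    (hm : m ∈ Submodule.span R S) (hm' : m' ∈ Submodule.span R S) :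
    B m m' ∈ Submodule.span R (Set.image2 (fun x y => B x y) S S) := by
  set I := Submodule.span R (Set.image2 (fun x y => B x y) S S)
  set Br : V →ₗ[R] V →ₗ[R] K := LinearMap.restrictScalars₁₂ R R B with hBr
  have key : ∀ x ∈ S, B x m' ∈ I := by
    intro x hx
    have : Submodule.span R S ≤ I.comap (Br x) := by
      rw [Submodule.span_le]
      intro y hy
      exact Submodule.subset_span (Set.mem_image2_of_mem hx hy)
    exact this hm'
  have : Submodule.span R S ≤ I.comap (Br.flip m') := by
    rw [Submodule.span_le]
    intro x hx
    exact key x hx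
  exact this hm

/-- common denominator: we can scale any vector into the lattice -/
lemma OS.exists_smul_mem (M : Submodule R V) (hM : Submodule.span K (M : Set V) = ⊤)
    (v : V) : ∃ r : R, r ≠ 0 ∧ r • v ∈ M := by
  have hv : v ∈ Submodule.span K (M : Set V) := by rw [hM]; trivial
  induction hv using Submodule.span_induction with
  | mem x hx => exact ⟨1, one_ne_zero, by simpa using hx⟩
  | zero => exact ⟨1, one_ne_zero, by simp⟩
  | add x y _ _ ihx ihy =>
    obtain ⟨r, hr, hrx⟩ := ihx
    obtain ⟨t, ht, hty⟩ := ihy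
    refine ⟨r * t, mul_ne_zero hr ht, ?_⟩
    rw [smul_add]
    have h1 : (r * t) • x = t • (r • x) := by rw [mul_comm, mul_smul]
    have h2 : (r * t) • y = r • (t • y) := by rw [mul_smul]
    rw [h1, h2]
    exact M.add_mem (M.smul_mem t hrx) (M.smul_mem r hty)
  | smul a x _ ih =>
    obtain ⟨r, hr, hrx⟩ := ih
    obtain ⟨⟨p, q⟩, hpq⟩ := IsLocalization.surj (nonZeroDivisors R) a
    refine ⟨q * r, mul_ne_zero (nonZeroDivisors.coe_ne_zero q) hr, ?_⟩
    have : (q * r : R) • (a • x) = p • (r • x) := by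
      rw [← IsScalarTower.algebraMap_smul K ((q : R) * r : R) (a • x),
        ← IsScalarTower.algebraMap_smul K (p : R) (r • x),
        ← IsScalarTower.algebraMap_smul K (r : R) x]
      rw [map_mul, smul_smul, smul_smul]
      congr 1
      linear_combination (algebraMap R K r) * hpq
    rw [this]
    exact M.smul_mem p hrx

lemma OS.exists_min_vector [Nontrivial V] (two : IsUnit (2 : R))
    (B : V →ₗ[K] V →ₗ[K] K) (hsymm : ∀ x y : V, B x y = B y x)
    (hnd : ∀ x : V, (∀ y : V, B x y = 0) → x = 0)
    (M : Submodule R V) (hfg : M.FG) (hsp : Submodule.span K (M : Set V) = ⊤) :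
    ∃ x ∈ M, B x x ≠ 0 ∧
      ∀ m ∈ M, ∀ m' ∈ M, ∃ r : R, B m m' = algebraMap R K r * B x x := by
  classical
  obtain ⟨s, hs⟩ := hfg
  -- the K-span of s is everything
  have hKs : Submodule.span K (↑s : Set V) = ⊤ := by
    rw [eq_top_iff, ← hsp]
    refine Submodule.span_le.mpr ?_
    intro m hm
    have : m ∈ Submodule.span R (↑s : Set V) := by rw [hs]; exact hm
    have hle : Submodule.span R (↑s : Set V)
        ≤ (Submodule.span K (↑s : Set V)).restrictScalars R :=
      Submodule.span_le.mpr (fun x hx => Submodule.subset_span hx)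
    exact hle this
  -- there is a nonzero value of B on s × s
  have hne : ∃ x ∈ s, ∃ y ∈ s, B x y ≠ 0 := by
    by_contra h
    push_neg at h
    have hy : ∀ y ∈ s, ∀ m : V, B m y = 0 := by
      intro y hys m
      have hle : Submodule.span K (↑s : Set V) ≤ LinearMap.ker (B.flip y) :=
        Submodule.span_le.mpr (fun x hx => LinearMap.mem_ker.mpr (h x hx y hys))
      have : m ∈ LinearMap.ker (B.flip y) := hle (by rw [hKs]; trivial)
      simpa using this
    have hall : ∀ m : V, m = 0 := by
      intro m
      refine hnd m (fun z => ?_)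
      have hle : Submodule.span K (↑s : Set V) ≤ LinearMap.ker (B m) :=
        Submodule.span_le.mpr (fun x hx => LinearMap.mem_ker.mpr (hy x hx m))
      have : z ∈ LinearMap.ker (B m) := hle (by rw [hKs]; trivial)
      simpa using this
    obtain ⟨v, hv⟩ := exists_ne (0 : V)
    exact hv (hall v)
  obtain ⟨x₀', hx₀', y₀', hy₀', hBne⟩ := hne
  set T : Finset K := Finset.image₂ (fun x y => B x y) s s with hT
  obtain ⟨c, hcT, hdvd⟩ := OS.finset_min (R := R) T
    ⟨B x₀' y₀', Finset.mem_image₂_of_mem hx₀' hy₀'⟩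
  have hc0 : c ≠ 0 := by
    rintro rfl
    obtain ⟨r, hr⟩ := hdvd (B x₀' y₀') (Finset.mem_image₂_of_mem hx₀' hy₀')
    simp at hr
    exact hBne hr
  -- every value of B on M × M is divisible by c
  have hdivAll : ∀ m ∈ M, ∀ m' ∈ M, ∃ r : R, B m m' = algebraMap R K r * c := by
    intro m hm m' hm'
    have hm1 : m ∈ Submodule.span R (↑s : Set V) := by rw [hs]; exact hm
    have hm2 : m' ∈ Submodule.span R (↑s : Set V) := by rw [hs]; exact hm'
    have hmem := OS.apply_mem_span B (↑s : Set V) hm1 hm2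
    have hle : Submodule.span R (Set.image2 (fun x y => B x y) (↑s : Set V) ↑s)
        ≤ Submodule.span R {c} := by
      refine Submodule.span_le.mpr ?_
      intro a ha
      have haT : a ∈ T := by
        rw [hT]
        rw [← Finset.coe_image₂] at ha
        exact_mod_cast ha
      obtain ⟨r, hr⟩ := hdvd a haT
      refine Submodule.mem_span_singleton.mpr ⟨r, ?_⟩
      rw [Algebra.smul_def, ← hr]
    obtain ⟨r, hr⟩ := Submodule.mem_span_singleton.mp (hle hmem)
    exact ⟨r, by rw [← hr, Algebra.smul_def]⟩
  -- c is attained as B x₀ y₀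
  obtain ⟨x₀, hx₀s, y₀, hy₀s, hxy⟩ := Finset.mem_image₂.mp hcT
  have hx₀M : x₀ ∈ M := by rw [← hs]; exact Submodule.subset_span hx₀s
  have hy₀M : y₀ ∈ M := by rw [← hs]; exact Submodule.subset_span hy₀s
  -- helper : any z ∈ M with B z z a unit multiple of c works
  suffices h : ∀ z ∈ M, ∀ rz : R, IsUnit rz → B z z = algebraMap R K rz * c →
      ∃ x ∈ M, B x x ≠ 0 ∧
        ∀ m ∈ M, ∀ m' ∈ M, ∃ r : R, B m m' = algebraMap R K r * B x x by
    obtain ⟨r1, h1⟩ := hdivAll (x₀ + y₀) (M.add_mem hx₀M hy₀M) (x₀ + y₀) (M.add_mem hx₀M hy₀M)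
    obtain ⟨r2, h2⟩ := hdivAll x₀ hx₀M x₀ hx₀M
    obtain ⟨r3, h3⟩ := hdivAll y₀ hy₀M y₀ hy₀M
    have hexp : B (x₀ + y₀) (x₀ + y₀) = B x₀ x₀ + B y₀ y₀ + 2 * c := by
      simp only [map_add, LinearMap.add_apply]
      rw [hsymm y₀ x₀, hxy]; ring
    have hsum : algebraMap R K r1 * c
        = algebraMap R K r2 * c + algebraMap R K r3 * c + 2 * c := by
      linear_combination hexp + h2 + h3 - h1
    have h4 : algebraMap R K (r1 - r2 - r3) * c = algebraMap R K 2 * c := by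
      rw [map_sub, map_sub, map_ofNat]
      linear_combination hsum
    have h5 : r1 - r2 - r3 = 2 := IsFractionRing.injective R K (mul_right_cancel₀ hc0 h4)
    have hU : IsUnit (r1 + (-r2 + -r3)) := by
      have : r1 + (-r2 + -r3) = r1 - r2 - r3 := by ring
      rw [this, h5]; exact two
    rcases IsLocalRing.isUnit_or_isUnit_of_isUnit_add hU with hu1 | h23
    · exact h (x₀ + y₀) (M.add_mem hx₀M hy₀M) r1 hu1 h1
    · rcases IsLocalRing.isUnit_or_isUnit_of_isUnit_add h23 with hu2 | hu3
      · exact h x₀ hx₀M r2 (by simpa using hu2.neg) h2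
      · exact h y₀ hy₀M r3 (by simpa using hu3.neg) h3
  intro z hzM rz hrz hz
  obtain ⟨u, hu⟩ := hrz
  have hinv : algebraMap R K (↑u⁻¹ : R) * algebraMap R K rz = 1 := by
    rw [← map_mul, ← hu, ← Units.val_mul, inv_mul_cancel, Units.val_one, map_one]
  refine ⟨z, hzM, ?_, ?_⟩
  · rw [hz]
    exact mul_ne_zero ((map_ne_zero_iff _ (IsFractionRing.injective R K)).mpr
      (by rw [← hu]; exact u.ne_zero)) hc0
  · intro m hm m' hm'
    obtain ⟨r', hr'⟩ := hdivAll m hm m' hm'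
    refine ⟨r' * ↑u⁻¹, ?_⟩
    rw [hz, hr', map_mul]
    rw [mul_assoc, ← mul_assoc (algebraMap R K (↑u⁻¹ : R)), hinv, one_mul]

universe u

set_option maxHeartbeats 1000000 in
theorem OS.aux (two : IsUnit (2 : R)) (n : ℕ) :
    ∀ {V₂ : Type u} [AddCommGroup V₂] [Module K V₂] [Module R V₂] [IsScalarTower R K V₂]
      [FiniteDimensional K V₂],
      Module.finrank K V₂ = n →
      ∀ (B : V₂ →ₗ[K] V₂ →ₗ[K] K), (∀ x y : V₂, B x y = B y x) →
      (∀ x : V₂, (∀ y : V₂, B x y = 0) → x = 0) →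
      ∀ (M : Submodule R V₂), M.FG → Submodule.span K (M : Set V₂) = ⊤ →
      ∃ W : Fin n → Submodule K V₂,
        DirectSum.IsInternal W ∧
        (∀ i, Module.finrank K (W i) = 1) ∧
        (∀ i j, i ≠ j → ∀ x ∈ W i, ∀ y ∈ W j, B x y = 0) ∧
        M = ⨆ i, (M ⊓ (W i).restrictScalars R) := by
  induction n with
  | zero =>
    intro V₂ _ _ _ _ _ hr B _ _ M _ _
    have hsub : Subsingleton V₂ := Module.finrank_zero_iff.mp hr
    refine ⟨Fin.elim0, ?_, fun i => i.elim0, fun i => i.elim0, Subsingleton.elim _ _⟩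
    exact DirectSum.isInternal_submodule_of_iSupIndep_of_iSup_eq_top
      (fun i => i.elim0) (Subsingleton.elim _ _)
  | succ n ih =>
    intro V₂ _ _ _ _ _ hr B hsymm hnd M hfg hsp
    haveI : Nontrivial V₂ := by
      rcases subsingleton_or_nontrivial V₂ with hss | hnt
      · rw [Module.finrank_zero_iff.mpr hss] at hr; omega
      · exact hnt
    obtain ⟨x, hxM, hBxx, hkey⟩ := OS.exists_min_vector two B hsymm hnd M hfg hsp
    have hx0 : x ≠ 0 := fun h => hBxx (by rw [h]; simp)
    set U : Submodule K V₂ := LinearMap.ker (B x) with hU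
    have hxU : ∀ u ∈ U, B x u = 0 := fun u hu => hu
    -- dimension of U is n
    have hBxTop : LinearMap.range (B x) = ⊤ := by
      rcases Ideal.eq_bot_or_top (LinearMap.range (B x)) with h | h
      · exfalso
        apply hBxx
        have : B x x ∈ LinearMap.range (B x) := ⟨x, rfl⟩
        rw [h] at this
        simpa using this
      · exact h
    have hUrank : Module.finrank K ↥U = n := by
      have h1 := LinearMap.finrank_range_add_finrank_ker (B x)
      rw [hBxTop, finrank_top, Module.finrank_self, hr, ← hU] at h1
      omega
    -- decomposition of vectors
    have hdec : ∀ v : V₂, v - (B x v / B x x) • x ∈ U := by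
      intro v
      have : B x (v - (B x v / B x x) • x) = 0 := by
        rw [map_sub, map_smul, smul_eq_mul, div_mul_cancel₀ _ hBxx, sub_self]
      exact this
    -- the restricted form
    set B' : ↥U →ₗ[K] ↥U →ₗ[K] K := B.compl₁₂ U.subtype U.subtype with hB'
    have hB'apply : ∀ (u w : ↥U), B' u w = B ↑u ↑w := fun u w => rfl
    have hsymm' : ∀ u w : ↥U, B' u w = B' w u := fun u w => hsymm ↑u ↑w
    have hnd' : ∀ u : ↥U, (∀ w : ↥U, B' u w = 0) → u = 0 := by
      intro u hu
      have : (↑u : V₂) = 0 := by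
        apply hnd
        intro y
        have hyw : y - (B x y / B x x) • x ∈ U := hdec y
        have hsplit : y = (B x y / B x x) • x + (y - (B x y / B x x) • x) := by abel
        rw [hsplit, map_add, map_smul, smul_eq_mul]
        have e1 : B ↑u x = 0 := by rw [hsymm ↑u x]; exact hxU ↑u u.2
        have e2 : B ↑u (y - (B x y / B x x) • x) = 0 := hu ⟨_, hyw⟩
        rw [e1, e2, mul_zero, add_zero]
      exact Subtype.ext this
    -- the lattice in U
    set M' : Submodule R ↥U := M.comap (U.subtype.restrictScalars R) with hM'def
    have hM'mem : ∀ u : ↥U, u ∈ M' ↔ (↑u : V₂) ∈ M := fun u => Iff.rfl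
    have hM'fg : M'.FG := by
      haveI hNoeth : IsNoetherian R ↥M := isNoetherian_of_fg_of_noetherian M hfg
      have hle : Submodule.map (U.subtype.restrictScalars R) M' ≤ M :=
        Submodule.map_comap_le _ _
      have heq : Submodule.map (U.subtype.restrictScalars R) M'
          = Submodule.map M.subtype (Submodule.comap M.subtype
              (Submodule.map (U.subtype.restrictScalars R) M')) := by
        rw [Submodule.map_comap_subtype, inf_eq_right.mpr hle]
      refine Submodule.fg_of_fg_map_injective (U.subtype.restrictScalars R)
        Subtype.coe_injective ?_
      rw [heq]
      exact (IsNoetherian.noetherian _).map _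
    have hM'span : Submodule.span K (M' : Set ↥U) = ⊤ := by
      rw [eq_top_iff]
      rintro u -
      obtain ⟨r, hr0, hrM⟩ := OS.exists_smul_mem M hsp (↑u : V₂)
      have hmem : r • u ∈ M' := by
        rw [hM'mem]
        simpa using hrM
      have har : algebraMap R K r ≠ 0 :=
        (map_ne_zero_iff _ (IsFractionRing.injective R K)).mpr hr0
      have : u = (algebraMap R K r)⁻¹ • (r • u) := by
        rw [← IsScalarTower.algebraMap_smul K r u, inv_smul_smul₀ har]
      rw [this]
      exact Submodule.smul_mem _ _ (Submodule.subset_span hmem)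
    obtain ⟨W', hint', hrank', horth', hlat'⟩ := ih hUrank B' hsymm' hnd' M' hM'fg hM'span
    -- assemble the splitting of V₂
    set W : Fin (n + 1) → Submodule K V₂ :=
      Fin.cons (Submodule.span K {x}) (fun i => (W' i).map U.subtype) with hW
    have hWz : W 0 = Submodule.span K {x} := rfl
    have hWs : ∀ i : Fin n, W i.succ = (W' i).map U.subtype := fun i => by
      rw [hW, Fin.cons_succ]
    have hxW0 : x ∈ W 0 := Submodule.mem_span_singleton_self x
    -- sup of the tail is U
    have hUsup : U = ⨆ i, W (Fin.succ i) := by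
      have h1 : Submodule.map U.subtype ⊤ = U := Submodule.map_subtype_top U
      rw [← hint'.submodule_iSup_eq_top, Submodule.map_iSup] at h1
      rw [← h1]
      exact iSup_congr fun i => (hWs i).symm
    have htail : (⨆ i, W (Fin.succ i)) ≤ ⨆ j, W j := iSup_le fun i => le_iSup W i.succ
    -- the sup is everything
    have htop : ⨆ i, W i = ⊤ := by
      rw [eq_top_iff]
      rintro v -
      have h1 : (B x v / B x x) • x ∈ ⨆ i, W i :=
        le_iSup W 0 (Submodule.smul_mem _ _ hxW0)
      have h2 : v - (B x v / B x x) • x ∈ ⨆ i, W i :=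
        htail (hUsup ▸ hdec v)
      have : v = (B x v / B x x) • x + (v - (B x v / B x x) • x) := by abel
      rw [this]
      exact add_mem h1 h2
    -- orthogonality
    have hxu : ∀ p ∈ W 0, ∀ (i : Fin n), ∀ q ∈ W i.succ, B p q = 0 := by
      intro p hp i q hq
      obtain ⟨a, rfl⟩ := Submodule.mem_span_singleton.mp (hWz ▸ hp)
      rw [hWs i] at hq
      obtain ⟨u, hu, rfl⟩ := hq
      have h0 : B x (U.subtype u) = 0 := hxU _ u.2
      rw [map_smul, LinearMap.smul_apply, h0, smul_zero]
    have horth : ∀ i j, i ≠ j → ∀ p ∈ W i, ∀ q ∈ W j, B p q = 0 := by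
      intro i j hij p hp q hq
      induction i using Fin.cases with
      | zero =>
        induction j using Fin.cases with
        | zero => exact absurd rfl hij
        | succ j => exact hxu p hp j q hq
      | succ i =>
        induction j using Fin.cases with
        | zero => rw [hsymm]; exact hxu q hq i p hp
        | succ j =>
          rw [hWs i] at hp
          rw [hWs j] at hq
          obtain ⟨u, hu, rfl⟩ := hp
          obtain ⟨w, hw, rfl⟩ := hq
          exact horth' i j (fun h => hij (by rw [h])) u hu w hw
    -- independence
    have hindep : iSupIndep W := by
      intro i
      rw [Submodule.disjoint_def]
      intro v hvi hvrest
      refine hnd v ?_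
      have hker : ∀ j, W j ≤ LinearMap.ker (B v) := by
        intro j
        rcases eq_or_ne j i with rfl | hne
        · intro y hy
          rw [LinearMap.mem_ker]
          have hsup : (⨆ k, ⨆ (_ : k ≠ j), W k) ≤ LinearMap.ker (B.flip y) := by
            refine iSup_le fun k => iSup_le fun hk => ?_
            intro p hp
            rw [LinearMap.mem_ker, LinearMap.flip_apply]
            exact horth k j hk p hp y hy
          simpa using hsup hvrest
        · intro y hy
          rw [LinearMap.mem_ker]
          exact horth i j (fun h => hne h.symm) v hvi y hy
      intro y
      have hy : y ∈ ⨆ j, W j := by rw [htop]; trivial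
      have := (iSup_le hker : (⨆ j, W j) ≤ LinearMap.ker (B v)) hy
      simpa using this
    -- ranks
    have hrank : ∀ i, Module.finrank K ↥(W i) = 1 := by
      intro i
      induction i using Fin.cases with
      | zero => rw [hWz]; exact finrank_span_singleton hx0
      | succ i =>
        rw [hWs i]
        rw [← LinearEquiv.finrank_eq
          (Submodule.equivMapOfInjective U.subtype U.injective_subtype (W' i))]
        exact hrank' i
    -- compatibility with the lattice
    have hlat : M = ⨆ i, (M ⊓ (W i).restrictScalars R) := by
      refine le_antisymm ?_ (iSup_le fun i => inf_le_left)
      intro m hm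
      obtain ⟨r, hrr⟩ := hkey x hxM m hm
      have hsmul : B x (r • x) = algebraMap R K r * B x x := by
        rw [← IsScalarTower.algebraMap_smul K r x, map_smul, smul_eq_mul]
      have hwU : m - r • x ∈ U := by
        show B x (m - r • x) = 0
        rw [map_sub, hsmul, hrr, sub_self]
      have hwM : m - r • x ∈ M := M.sub_mem hm (M.smul_mem r hxM)
      have h1 : r • x ∈ M ⊓ (W 0).restrictScalars R := by
        refine ⟨M.smul_mem r hxM, ?_⟩
        show r • x ∈ W 0
        rw [hWz, ← IsScalarTower.algebraMap_smul K r x]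
        exact Submodule.smul_mem _ _ (Submodule.mem_span_singleton_self x)
      have h2 : m - r • x ∈ ⨆ i, (M ⊓ (W i).restrictScalars R) := by
        have hwM' : (⟨m - r • x, hwU⟩ : ↥U) ∈ M' := by rw [hM'mem]; exact hwM
        rw [hlat'] at hwM'
        have hmap : Submodule.map (U.subtype.restrictScalars R)
            (⨆ i, (M' ⊓ (W' i).restrictScalars R))
            ≤ ⨆ i, (M ⊓ (W i).restrictScalars R) := by
          rw [Submodule.map_iSup]
          refine iSup_le fun i => le_trans ?_ (le_iSup _ i.succ)
          rintro p ⟨u, ⟨huM, huW⟩, rfl⟩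
          refine ⟨huM, ?_⟩
          show (U.subtype.restrictScalars R) u ∈ W i.succ
          rw [hWs i]
          exact ⟨u, huW, rfl⟩
        exact hmap ⟨_, hwM', rfl⟩
      have hms : m = r • x + (m - r • x) := by abel
      rw [hms]
      exact add_mem ((le_iSup (fun i => M ⊓ (W i).restrictScalars R) 0) h1) h2
    exact ⟨W, DirectSum.isInternal_submodule_of_iSupIndep_of_iSup_eq_top hindep htop,
      hrank, horth, hlat⟩


/-- If `char k ≠ 2` (`k` the residue field of `R`), `B` a nondegenerate symmetric bilinear
form on `V` and `M` any lattice, there is an orthogonal decomposition `V = ⊕ᵢ Vᵢ` into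
one-dimensional subspaces which is compatible with `M`. -/
theorem exists_orthogonal_splitting
    (hk : ringChar (IsLocalRing.ResidueField R) ≠ 2)
    (B : V →ₗ[K] V →ₗ[K] K)
    (hsymm : ∀ x y : V, B x y = B y x)
    (hnd : ∀ x : V, (∀ y : V, B x y = 0) → x = 0)
    (M : Submodule R V) (hM : IsLattice K M) :
    ∃ W : Fin (Module.finrank K V) → Submodule K V,
      DirectSum.IsInternal W ∧
      (∀ i, Module.finrank K (W i) = 1) ∧
      (∀ i j, i ≠ j → ∀ x ∈ W i, ∀ y ∈ W j, B x y = 0) ∧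
      M = ⨆ i, (M ⊓ (W i).restrictScalars R) := by
  have h2 : (2 : IsLocalRing.ResidueField R) ≠ 0 := Ring.two_ne_zero hk
  have two : IsUnit (2 : R) := by
    rw [← IsLocalRing.notMem_maximalIdeal, ← IsLocalRing.residue_eq_zero_iff]
    rw [map_ofNat]
    exact h2
  obtain ⟨hfg, hsp⟩ := hM
  exact OS.aux two (Module.finrank K V) rfl B hsymm hnd M hfg hsp
end

section
/- Let k be a field, A_k a k-algebra with involution a ↦ a*, E a finite-dimensional A_k-module with a nondegenerate alternating bilinear form b satisfying b(ax,y) = b(x,a*y). If S is a totally isotropic A_k-submodule of E maximal with that property, and S⊥ its orthogonal, then the A_k-module S⊥/S is semisimple and its only totally isotropic A_k-submodule (for the induced form) is 0. -/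
section

variable {k A E : Type*} [Field k] [Ring A] [Algebra k A]
  [AddCommGroup E] [Module k E] [Module A E] [IsScalarTower k A E]
  [FiniteDimensional k E]

/-- The orthogonal `S⊥` of a totally isotropic `A`-submodule `S` (for a bilinear form `b`
compatible with the involution `σ`): it is again an `A`-submodule. -/
def orthogonalSubmodule (σ : A →ₗ[k] A)
    (b : E →ₗ[k] E →ₗ[k] k)
    (hcompat : ∀ (a : A) (x y : E), b (a • x) y = b x (σ a • y))
    (S : Submodule A E) : Submodule A E where
  carrier := {x | ∀ y ∈ S, b x y = 0}
  add_mem' := by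
    intro u v hu hv y hy
    rw [map_add, LinearMap.add_apply, hu y hy, hv y hy, add_zero]
  zero_mem' := by
    intro y hy
    rw [map_zero, LinearMap.zero_apply]
  smul_mem' := by
    intro a x hx y hy
    rw [hcompat a x y]
    exact hx _ (S.smul_mem _ hy)

lemma mem_orthogonalSubmodule_iff (σ : A →ₗ[k] A)
    (b : E →ₗ[k] E →ₗ[k] k)
    (hcompat : ∀ (a : A) (x y : E), b (a • x) y = b x (σ a • y))
    (S : Submodule A E) (x : E) :
    x ∈ orthogonalSubmodule σ b hcompat S ↔ ∀ y ∈ S, b x y = 0 := Iff.rfl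

lemma orthogonalSubmodule_restrictScalars (σ : A →ₗ[k] A)
    (b : E →ₗ[k] E →ₗ[k] k) (halt : ∀ x : E, b x x = 0)
    (hcompat : ∀ (a : A) (x y : E), b (a • x) y = b x (σ a • y))
    (V : Submodule A E) :
    (orthogonalSubmodule σ b hcompat V).restrictScalars k
      = LinearMap.BilinForm.orthogonal b (V.restrictScalars k) := by
  have hrefl : b.IsRefl := LinearMap.IsAlt.isRefl halt
  ext x
  constructor
  · intro hx y hy
    exact hrefl x y (hx y hy)
  · intro hx y hy
    exact hrefl y x (hx y hy)

/-- Let `A` be a `k`-algebra with a `k`-linear involution `σ`, `E` a finite-dimensional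
`A`-module with a nondegenerate alternating bilinear form `b` with
`b(ax,y) = b(x,a*y)`.  If `S` is a maximal totally isotropic `A`-submodule and `S⊥` its
orthogonal, then `S⊥/S` is a semisimple `A`-module whose only totally isotropic
`A`-submodule (for the induced form) is `0`. -/
theorem semisimple_of_maximal_isotropic
    (σ : A →ₗ[k] A) (hσ2 : ∀ a, σ (σ a) = a) (hσm : ∀ a b, σ (a * b) = σ b * σ a)
    (b : E →ₗ[k] E →ₗ[k] k)
    (halt : ∀ x : E, b x x = 0)
    (hnd : ∀ x : E, (∀ y : E, b x y = 0) → x = 0)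
    (hcompat : ∀ (a : A) (x y : E), b (a • x) y = b x (σ a • y))
    (S : Submodule A E)
    (hiso : ∀ x ∈ S, ∀ y ∈ S, b x y = 0)
    (hmax : ∀ S' : Submodule A E, (∀ x ∈ S', ∀ y ∈ S', b x y = 0) → S ≤ S' → S' = S) :
    IsSemisimpleModule A
      ((orthogonalSubmodule σ b hcompat S) ⧸
        (S.comap (orthogonalSubmodule σ b hcompat S).subtype)) ∧
    ∀ Y : Submodule A
        ((orthogonalSubmodule σ b hcompat S) ⧸
          (S.comap (orthogonalSubmodule σ b hcompat S).subtype)),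
      (∀ x y : (orthogonalSubmodule σ b hcompat S),
        (S.comap (orthogonalSubmodule σ b hcompat S).subtype).mkQ x ∈ Y →
        (S.comap (orthogonalSubmodule σ b hcompat S).subtype).mkQ y ∈ Y →
        b (x : E) (y : E) = 0) → Y = ⊥ := by
  classical
  set T : Submodule A E := orthogonalSubmodule σ b hcompat S with hTdef
  set S' : Submodule A T := S.comap T.subtype with hS'def
  have hskew : ∀ x y : E, b x y = - b y x := by
    intro x y
    have h := halt (x + y)
    simp only [map_add, LinearMap.add_apply, halt, zero_add, add_zero] at h
    linear_combination h
  have hrefl : b.IsRefl := LinearMap.IsAlt.isRefl halt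
  have hbnd : LinearMap.BilinForm.Nondegenerate b :=
    hrefl.nondegenerate_iff_separatingLeft.mpr hnd
  have hST : S ≤ T := fun s hs y hy => hiso s hs y hy
  have hmemS' : ∀ x : T, x ∈ S' ↔ (x : E) ∈ S := fun x => Iff.rfl
  -- the second statement
  have key : ∀ Y : Submodule A (T ⧸ S'),
      (∀ x y : T, S'.mkQ x ∈ Y → S'.mkQ y ∈ Y → b (x : E) (y : E) = 0) → Y = ⊥ := by
    intro Y hY
    have hSY : Submodule.map T.subtype (Y.comap S'.mkQ) = S := by
      apply hmax
      · rintro x ⟨x', hx', rfl⟩ y ⟨y', hy', rfl⟩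
        exact hY x' y' hx' hy'
      · intro s hs
        refine ⟨⟨s, hST hs⟩, ?_, rfl⟩
        have h0 : S'.mkQ ⟨s, hST hs⟩ = 0 := by
          rw [Submodule.mkQ_apply, Submodule.Quotient.mk_eq_zero]
          exact hs
        show S'.mkQ ⟨s, hST hs⟩ ∈ Y
        rw [h0]; exact Y.zero_mem
    rw [eq_bot_iff]
    intro w hw
    obtain ⟨x, rfl⟩ := S'.mkQ_surjective w
    have hxS : (x : E) ∈ S := hSY ▸ ⟨x, hw, rfl⟩
    have hx : x ∈ S' := hxS
    rw [Submodule.mem_bot, Submodule.mkQ_apply, Submodule.Quotient.mk_eq_zero]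
    exact hx
  refine ⟨(isSemisimpleModule_iff _ _).mpr ⟨fun N => ?_⟩, key⟩
  -- complement of N
  set M : Submodule A E := Submodule.map T.subtype (N.comap S'.mkQ) with hMdef
  have hSM : S ≤ M := by
    intro s hs
    refine ⟨⟨s, hST hs⟩, ?_, rfl⟩
    have h0 : S'.mkQ ⟨s, hST hs⟩ = 0 := by
      rw [Submodule.mkQ_apply, Submodule.Quotient.mk_eq_zero]
      exact hs
    show S'.mkQ ⟨s, hST hs⟩ ∈ N
    rw [h0]; exact N.zero_mem
  have hMT : M ≤ T := by rintro x ⟨x', _, rfl⟩; exact x'.2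
  set P_E : Submodule A E := orthogonalSubmodule σ b hcompat M with hPEdef
  have hPT : P_E ≤ T := fun x hx y hy => hx y (hSM hy)
  have hSP : S ≤ P_E := by
    intro s hs y hy
    rw [hskew s y, hMT hy s hs, neg_zero]
  have hMPS : M ⊓ P_E ≤ S := by
    have h1 : S ⊔ (M ⊓ P_E) = S := by
      apply hmax _ _ le_sup_left
      intro x hx y hy
      rw [Submodule.mem_sup] at hx hy
      obtain ⟨s, hs, q, hq, rfl⟩ := hx
      obtain ⟨s', hs', q', hq', rfl⟩ := hy
      simp only [map_add, LinearMap.add_apply]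
      have h1 : b s s' = 0 := hiso s hs s' hs'
      have h2 : b s q' = 0 := by rw [hskew s q', hq'.2 s (hSM hs), neg_zero]
      have h3 : b q s' = 0 := hq.2 s' (hSM hs')
      have h4 : b q q' = 0 := hq.2 q' hq'.1
      rw [h1, h2, h3, h4]; ring
    calc M ⊓ P_E ≤ S ⊔ (M ⊓ P_E) := le_sup_right
      _ = S := h1
  have hMP : M ⊓ P_E = S := le_antisymm hMPS (le_inf hSM hSP)
  -- dimension count
  have hinfk : (M.restrictScalars k) ⊓ (P_E.restrictScalars k) = S.restrictScalars k := by
    ext x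
    simp only [Submodule.mem_inf, Submodule.restrictScalars_mem]
    rw [← Submodule.mem_inf, hMP]
  have hfP : Module.finrank k (P_E.restrictScalars k)
      = Module.finrank k E - Module.finrank k (M.restrictScalars k) := by
    rw [hPEdef, orthogonalSubmodule_restrictScalars σ b halt hcompat]
    exact LinearMap.BilinForm.finrank_orthogonal hbnd _
  have hfT : Module.finrank k (T.restrictScalars k)
      = Module.finrank k E - Module.finrank k (S.restrictScalars k) := by
    rw [hTdef, orthogonalSubmodule_restrictScalars σ b halt hcompat]
    exact LinearMap.BilinForm.finrank_orthogonal hbnd _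
  have hMle : Module.finrank k (M.restrictScalars k) ≤ Module.finrank k E :=
    Submodule.finrank_le _
  have hSleM : Module.finrank k (S.restrictScalars k)
      ≤ Module.finrank k (M.restrictScalars k) :=
    Submodule.finrank_mono hSM
  have hsupk : (M.restrictScalars k) ⊔ (P_E.restrictScalars k) = T.restrictScalars k := by
    apply Submodule.eq_of_le_of_finrank_le
      (sup_le (show M.restrictScalars k ≤ T.restrictScalars k from hMT)
        (show P_E.restrictScalars k ≤ T.restrictScalars k from hPT))
    have hadd := Submodule.finrank_sup_add_finrank_inf_eq
      (M.restrictScalars k) (P_E.restrictScalars k)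
    rw [hinfk] at hadd
    omega
  -- the complement
  refine ⟨Submodule.map S'.mkQ (P_E.comap T.subtype), ?_, ?_⟩
  · rw [Submodule.disjoint_def]
    rintro w hwN ⟨p, hpP, rfl⟩
    have hpM : (p : E) ∈ M := ⟨p, hwN, rfl⟩
    have hpS : (p : E) ∈ S := hMPS ⟨hpM, hpP⟩
    rw [Submodule.mkQ_apply, Submodule.Quotient.mk_eq_zero]
    exact hpS
  · rw [codisjoint_iff, eq_top_iff]
    intro w _
    obtain ⟨x, rfl⟩ := S'.mkQ_surjective w
    have hx : (x : E) ∈ (M.restrictScalars k) ⊔ (P_E.restrictScalars k) := by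
      rw [hsupk]; exact x.2
    rw [Submodule.mem_sup] at hx
    obtain ⟨m, hm, p, hp, hmp⟩ := hx
    have hmT : m ∈ T := hMT hm
    have hpT : p ∈ T := hPT hp
    have hxsum : x = (⟨m, hmT⟩ : T) + ⟨p, hpT⟩ := by
      apply Subtype.ext
      exact hmp.symm
    rw [hxsum, map_add]
    apply Submodule.add_mem_sup
    · obtain ⟨m', hm', hmeq⟩ := hm
      have : (⟨m, hmT⟩ : T) = m' := Subtype.ext hmeq.symm
      rw [this]
      exact hm'
    · exact ⟨⟨p, hpT⟩, hp, rfl⟩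
end
end
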